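/- Conservation of mass for the second order (predictor–corrector) 1D scheme: if ρ* ∈ ℝ^N satisfies the predictor step and ρ^{n+1}_j = 2ρ*_j − ρ^n_j for all j, then Σ_{j=1}^N h_j ρ^{n+1}_j = Σ_{j=1}^N h_j ρ^n_j. -/

import Mathlib

lemma tele_aux (f : ℕ → ℝ) (n : ℕ) :
    ∑ i ∈ Finset.Icc 1 n, (f i - f (i - 1)) = f n - f 0 := by
  induction n with
  | zero => simp
  | succ m ih =>
    rw [Finset.sum_Icc_succ_top (by omega), ih]
    simp

theorem predictor_corrector_mass_conservation_1d
    (N : ℕ) (hN : 2 ≤ N)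
    (h : ℕ → ℝ) (hpos : ∀ j ∈ Finset.Icc 1 N, 0 < h j)
    (a : ℝ)
    (xhalf xc hhalf : ℕ → ℝ)
    (hxhalf0 : xhalf 0 = a)
    (hxhalf : ∀ j ∈ Finset.Icc 1 N, xhalf j = xhalf (j - 1) + h j)
    (hxc : ∀ j ∈ Finset.Icc 1 N, xc j = xhalf (j - 1) + h j / 2)
    (hhhalf : ∀ j ∈ Finset.Icc 1 (N - 1), hhalf j = (h j + h (j + 1)) / 2)
    (V W : ℝ → ℝ)
    (Q : ℝ → (ℕ → ℝ) → ℝ)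
    (hQ : ∀ (x : ℝ) (v : ℕ → ℝ), Q x v =
      Real.exp (-V x - ∑ i ∈ Finset.Icc 1 N, h i * W (xc i - x) * v i))
    (ρn ρnm1 ρstar ρ1 : ℕ → ℝ) (τ : ℝ) (hτ : 0 < τ)
    (Ms Mshalf : ℕ → ℝ)
    (hMs : ∀ j ∈ Finset.Icc 1 N, Ms j = Q (xc j) (fun i => 3 / 2 * ρn i - 1 / 2 * ρnm1 i))
    (hMshalf : ∀ j ∈ Finset.Icc 1 (N - 1),
      Mshalf j = Q (xhalf j) (fun i => 3 / 2 * ρn i - 1 / 2 * ρnm1 i))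
    (Cs : ℕ → ℝ)
    (hCs : ∀ j ∈ Finset.Icc 1 (N - 1),
      Cs j = Mshalf j / hhalf j * (ρstar (j + 1) / Ms (j + 1) - ρstar j / Ms j))
    (hCs0 : Cs 0 = 0) (hCsN : Cs N = 0)
    (hpred : ∀ j ∈ Finset.Icc 1 N, (ρstar j - ρn j) / (τ / 2) = (Cs j - Cs (j - 1)) / h j)
    (hcorr : ∀ j ∈ Finset.Icc 1 N, ρ1 j = 2 * ρstar j - ρn j)
 :
    ∑ j ∈ Finset.Icc 1 N, h j * ρ1 j = ∑ j ∈ Finset.Icc 1 N, h j * ρn j := by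
  have key : ∀ j ∈ Finset.Icc 1 N, h j * ρ1 j - h j * ρn j = τ * (Cs j - Cs (j - 1)) := by
    intro j hj
    have hp := hpred j hj
    have hc := hcorr j hj
    have hh := hpos j hj
    have hstar : ρstar j - ρn j = (Cs j - Cs (j - 1)) / h j * (τ / 2) := by
      field_simp at hp
      field_simp
      linarith [hp]
    have hτne : τ ≠ 0 := ne_of_gt hτ
    have hhne : h j ≠ 0 := ne_of_gt hh
    rw [hc, show h j * (2 * ρstar j - ρn j) - h j * ρn j = 2 * (h j * (ρstar j - ρn j)) from by
      ring, hstar]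
    field_simp
  have hsum : ∑ j ∈ Finset.Icc 1 N, (h j * ρ1 j - h j * ρn j)
      = τ * (Cs N - Cs 0) := by
    rw [Finset.sum_congr rfl key]
    rw [← Finset.mul_sum]
    congr 1
    exact tele_aux Cs N
  rw [Finset.sum_sub_distrib] at hsum
  rw [hCs0, hCsN] at hsum
  simp at hsum
  linarith [hsum]
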